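/- Let M be a smooth manifold modelled on a real normed (Banach) space. Let P be a real linear subspace of the smooth real-valued functions on M, let {·,·} : P × P → (M → ℝ) be ℝ-bilinear and antisymmetric ({f,g} = −{g,f} pointwise), and let # assign to every f ∈ P a section #f of the tangent bundle of M such that for all f, g ∈ P and every m ∈ M, {f,g}(m) equals the manifold derivative of g at m evaluated on (#f)(m). Then the bracket at a point depends only on the differentials at that point: if f₁, f₂, g₁, g₂ ∈ P and m ∈ M satisfy mfderiv f₁ m = mfderiv f₂ m and mfderiv g₁ m = mfderiv g₂ m, then {f₁,g₁}(m) = {f₂,g₂}(m). -/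

import Mathlib

open scoped Manifold

/-- The bracket at a point depends only on the differentials at that point
(Proposition 2.2(iii)). -/
theorem stmt1
    {E : Type*} [NormedAddCommGroup E] [NormedSpace ℝ E]
    {HM : Type*} [TopologicalSpace HM] {I : ModelWithCorners ℝ E HM}
    [I.Boundaryless]
    {M : Type*} [TopologicalSpace M] [ChartedSpace HM M]
    [IsManifold I (⊤ : ℕ∞) M]
    (P : Set (M → ℝ))
    (hPsmooth : ∀ f ∈ P, ContMDiff I 𝓘(ℝ, ℝ) (⊤ : ℕ∞) f)
    (hPadd : ∀ f ∈ P, ∀ g ∈ P, f + g ∈ P)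
    (hPsmul : ∀ (c : ℝ), ∀ f ∈ P, c • f ∈ P)
    (bracket : (M → ℝ) → (M → ℝ) → M → ℝ)
    (hanti : ∀ f ∈ P, ∀ g ∈ P, ∀ m : M, bracket f g m = - bracket g f m)
    (haddl : ∀ f₁ ∈ P, ∀ f₂ ∈ P, ∀ g ∈ P, ∀ m : M,
      bracket (f₁ + f₂) g m = bracket f₁ g m + bracket f₂ g m)
    (hsmull : ∀ (c : ℝ), ∀ f ∈ P, ∀ g ∈ P, ∀ m : M,
      bracket (c • f) g m = c * bracket f g m)
    (haddr : ∀ f ∈ P, ∀ g₁ ∈ P, ∀ g₂ ∈ P, ∀ m : M,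
      bracket f (g₁ + g₂) m = bracket f g₁ m + bracket f g₂ m)
    (hsmulr : ∀ (c : ℝ), ∀ f ∈ P, ∀ g ∈ P, ∀ m : M,
      bracket f (c • g) m = c * bracket f g m)
    (X : (M → ℝ) → (m : M) → TangentSpace I m)
    (hcompat : ∀ f ∈ P, ∀ g ∈ P, ∀ m : M,
      bracket f g m = mfderiv I 𝓘(ℝ, ℝ) g m (X f m)) :
    ∀ f₁ ∈ P, ∀ f₂ ∈ P, ∀ g₁ ∈ P, ∀ g₂ ∈ P, ∀ m : M,
      (mfderiv I 𝓘(ℝ, ℝ) f₁ m : TangentSpace I m →L[ℝ] ℝ)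
        = (mfderiv I 𝓘(ℝ, ℝ) f₂ m : TangentSpace I m →L[ℝ] ℝ) →
      (mfderiv I 𝓘(ℝ, ℝ) g₁ m : TangentSpace I m →L[ℝ] ℝ)
        = (mfderiv I 𝓘(ℝ, ℝ) g₂ m : TangentSpace I m →L[ℝ] ℝ) →
      bracket f₁ g₁ m = bracket f₂ g₂ m := by
  intro f₁ hf₁ f₂ hf₂ g₁ hg₁ g₂ hg₂ m hf hg
  have step1 : bracket f₁ g₁ m = bracket f₂ g₁ m := by
    rw [hanti f₁ hf₁ g₁ hg₁ m, hanti f₂ hf₂ g₁ hg₁ m,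
      hcompat g₁ hg₁ f₁ hf₁ m, hcompat g₁ hg₁ f₂ hf₂ m, hf]
    rfl
  rw [step1, hcompat f₂ hf₂ g₁ hg₁ m, hcompat f₂ hf₂ g₂ hg₂ m, hg]
  rfl
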